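/- The associated graded of the Yangian filtration is commutative: with the filtration on Y(gl_n) given by deg t_{ij}^{(r)} = r, for any x of filtration degree ≤ p and y of filtration degree ≤ q, the commutator [x,y] has filtration degree ≤ p + q - 1. Consequently the associated graded algebra gr Y(gl_n) is commutative and inherits a Poisson bracket. -/

import Mathlib

open scoped BigOperators

abbrev YFA (n : ℕ) := FreeAlgebra ℂ (Fin n × Fin n × ℕ)

noncomputable def tFree (n : ℕ) (i j : Fin n) (r : ℕ) : YFA n :=
  if r = 0 then (if i = j then 1 else 0) else FreeAlgebra.ι ℂ (i, j, r)

inductive YangianRel (n : ℕ) : YFA n → YFA n → Prop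
  | rel (i j k l : Fin n) (r s : ℕ) :
      YangianRel n
        (⁅tFree n i j (r+1), tFree n k l s⁆ - ⁅tFree n i j r, tFree n k l (s+1)⁆)
        (tFree n k j r * tFree n i l s - tFree n k j s * tFree n i l r)

abbrev Yangian (n : ℕ) := RingQuot (YangianRel n)

noncomputable def t (n : ℕ) (i j : Fin n) (r : ℕ) : Yangian n :=
  RingQuot.mkAlgHom ℂ (YangianRel n) (tFree n i j r)

/-- The `r`-th filtered piece `Y_r(gl_n)` of the Yangian: the span of products of
generators `t_{ij}^{(s)}` of total degree (sum of the `s`'s) at most `r`. -/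
noncomputable def YFil (n r : ℕ) : Submodule ℂ (Yangian n) :=
  Submodule.span ℂ {x | ∃ L : List (Fin n × Fin n × ℕ),
    (L.map fun p => p.2.2).sum ≤ r ∧ x = (L.map fun p => t n p.1 p.2.1 p.2.2).prod}

/-! ### Auxiliary lemmas -/

lemma t_zero (n : ℕ) (i j : Fin n) : t n i j 0 = if i = j then 1 else 0 := by
  unfold t tFree
  by_cases h : i = j <;> simp [h]

lemma YFil_mono (n : ℕ) {p q : ℕ} (h : p ≤ q) : YFil n p ≤ YFil n q := by
  apply Submodule.span_mono
  rintro x ⟨L, hL, rfl⟩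
  exact ⟨L, hL.trans h, rfl⟩

lemma t_mem_YFil (n : ℕ) (i j : Fin n) (r r' : ℕ) (h : r ≤ r') :
    t n i j r ∈ YFil n r' := by
  apply Submodule.subset_span
  exact ⟨[(i, j, r)], by simpa using h, by simp⟩

lemma one_mem_YFil (n r : ℕ) : (1 : Yangian n) ∈ YFil n r :=
  Submodule.subset_span ⟨[], by simp, by simp⟩

lemma prod_mem_YFil (n : ℕ) (L : List (Fin n × Fin n × ℕ)) (r : ℕ)
    (h : (L.map fun p => p.2.2).sum ≤ r) :
    (L.map fun p => t n p.1 p.2.1 p.2.2).prod ∈ YFil n r :=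
  Submodule.subset_span ⟨L, h, rfl⟩

lemma mul_mem_YFil (n : ℕ) {p q : ℕ} {x y : Yangian n}
    (hx : x ∈ YFil n p) (hy : y ∈ YFil n q) : x * y ∈ YFil n (p + q) := by
  have hxy : x * y ∈ YFil n p * YFil n q := Submodule.mul_mem_mul hx hy
  rw [YFil, YFil, Submodule.span_mul_span] at hxy
  refine Submodule.span_le.mpr ?_ hxy
  rintro z ⟨a, ⟨L, hL, rfl⟩, b, ⟨M, hM, rfl⟩, rfl⟩
  apply Submodule.subset_span
  refine ⟨L ++ M, ?_, ?_⟩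
  · rw [List.map_append, List.sum_append]; omega
  · rw [List.map_append, List.prod_append]

/-- The defining relation, in the quotient. -/
lemma yangian_relation (n : ℕ) (i j k l : Fin n) (r s : ℕ) :
    ⁅t n i j (r+1), t n k l s⁆ =
      ⁅t n i j r, t n k l (s+1)⁆ +
        (t n k j r * t n i l s - t n k j s * t n i l r) := by
  have h := RingQuot.mkAlgHom_rel ℂ (YangianRel.rel (n := n) i j k l r s)
  simp only [Ring.lie_def, map_sub, map_mul] at h ⊢
  unfold t
  rw [sub_eq_iff_eq_add] at h
  rw [h]
  abel

/-- Base case: commutator of two generators drops degree by one. -/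
lemma bracket_tt (n : ℕ) (i j k l : Fin n) (r : ℕ) :
    ∀ s, ⁅t n i j r, t n k l s⁆ ∈ YFil n (r + s - 1) := by
  induction r with
  | zero =>
    intro s
    rw [t_zero]
    by_cases h : i = j <;> simp [h, Ring.lie_def]
  | succ r ih =>
    intro s
    rw [yangian_relation]
    have h1 : ⁅t n i j r, t n k l (s+1)⁆ ∈ YFil n (r + 1 + s - 1) := by
      have := ih (s + 1)
      have e : r + (s + 1) - 1 = r + 1 + s - 1 := by omega
      rwa [e] at this
    refine Submodule.add_mem _ h1 (Submodule.sub_mem _ ?_ ?_)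
    · have := mul_mem_YFil n (t_mem_YFil n k j r r le_rfl) (t_mem_YFil n i l s s le_rfl)
      exact YFil_mono n (by omega) this
    · have := mul_mem_YFil n (t_mem_YFil n k j s s le_rfl) (t_mem_YFil n i l r r le_rfl)
      exact YFil_mono n (by omega) this

lemma bracket_t_prod (n : ℕ) (i j : Fin n) (r : ℕ) (hr : 1 ≤ r) :
    ∀ M : List (Fin n × Fin n × ℕ),
      ⁅t n i j r, (M.map fun p => t n p.1 p.2.1 p.2.2).prod⁆ ∈
        YFil n (r + (M.map fun p => p.2.2).sum - 1) := by
  intro M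
  induction M with
  | nil => simp [Ring.lie_def]
  | cons b M ih =>
    obtain ⟨k, l, s⟩ := b
    simp only [List.map_cons, List.prod_cons, List.sum_cons]
    have hleib : ⁅t n i j r, t n k l s * (M.map fun p => t n p.1 p.2.1 p.2.2).prod⁆ =
        ⁅t n i j r, t n k l s⁆ * (M.map fun p => t n p.1 p.2.1 p.2.2).prod +
          t n k l s * ⁅t n i j r, (M.map fun p => t n p.1 p.2.1 p.2.2).prod⁆ := by
      simp only [Ring.lie_def, mul_sub, sub_mul, mul_assoc]; abel
    rw [hleib]
    refine Submodule.add_mem _ ?_ ?_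
    · have h1 : ⁅t n i j r, t n k l s⁆ ∈ YFil n (r + s - 1) := bracket_tt n i j k l r s
      have h2 := prod_mem_YFil n M _ le_rfl
      have := mul_mem_YFil n h1 h2
      exact YFil_mono n (by omega) this
    · have h1 : t n k l s ∈ YFil n s := t_mem_YFil n k l s s le_rfl
      have := mul_mem_YFil n h1 ih
      exact YFil_mono n (by omega) this

/-- A product of degree-zero generators is `0` or `1`. -/
lemma prod_deg_zero (n : ℕ) :
    ∀ M : List (Fin n × Fin n × ℕ), (M.map fun p => p.2.2).sum = 0 →
      (M.map fun p => t n p.1 p.2.1 p.2.2).prod = 0 ∨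
        (M.map fun p => t n p.1 p.2.1 p.2.2).prod = 1 := by
  intro M
  induction M with
  | nil => exact fun _ => Or.inr (by simp)
  | cons b M ih =>
    obtain ⟨k, l, s⟩ := b
    intro h
    simp only [List.map_cons, List.sum_cons] at h
    have hs : s = 0 := by omega
    have hM := ih (by omega)
    subst hs
    simp only [List.map_cons, List.prod_cons, t_zero]
    by_cases hkl : k = l
    · rw [if_pos hkl, one_mul]; exact hM
    · left; rw [if_neg hkl, zero_mul]

lemma bracket_prod_prod (n : ℕ) (M : List (Fin n × Fin n × ℕ)) :
    ∀ L : List (Fin n × Fin n × ℕ),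
      ⁅(L.map fun p => t n p.1 p.2.1 p.2.2).prod, (M.map fun p => t n p.1 p.2.1 p.2.2).prod⁆ ∈
        YFil n ((L.map fun p => p.2.2).sum + (M.map fun p => p.2.2).sum - 1) := by
  by_cases hM : (M.map fun p => p.2.2).sum = 0
  · intro L
    rcases prod_deg_zero n M hM with h | h <;> rw [h]
    · simp only [Ring.lie_def, mul_zero, zero_mul, sub_self]; exact Submodule.zero_mem _
    · have h1 : ∀ z : Yangian n, ⁅z, (1 : Yangian n)⁆ = 0 := fun z => by
        simp [Ring.lie_def]
      rw [h1]; exact Submodule.zero_mem _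
  · intro L
    induction L with
    | nil => simp [Ring.lie_def]
    | cons a L ih =>
      obtain ⟨i, j, r⟩ := a
      simp only [List.map_cons, List.prod_cons, List.sum_cons]
      set P := (L.map fun p => t n p.1 p.2.1 p.2.2).prod with hP
      set Q := (M.map fun p => t n p.1 p.2.1 p.2.2).prod with hQ
      have hleib : ⁅t n i j r * P, Q⁆ = t n i j r * ⁅P, Q⁆ + ⁅t n i j r, Q⁆ * P := by
        simp only [Ring.lie_def, mul_sub, sub_mul, mul_assoc]; abel
      rw [hleib]
      refine Submodule.add_mem _ ?_ ?_
      · have h1 : t n i j r ∈ YFil n r := t_mem_YFil n i j r r le_rfl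
        have := mul_mem_YFil n h1 ih
        exact YFil_mono n (by omega) this
      · by_cases hr : r = 0
        · subst hr
          rw [t_zero]
          by_cases hij : i = j
          · rw [if_pos hij]
            have : ⁅(1 : Yangian n), Q⁆ = 0 := by simp [Ring.lie_def]
            rw [this, zero_mul]
            exact Submodule.zero_mem _
          · rw [if_neg hij]
            have : ⁅(0 : Yangian n), Q⁆ = 0 := by simp [Ring.lie_def]
            rw [this, zero_mul]
            exact Submodule.zero_mem _
        · have h1 := bracket_t_prod n i j r (by omega) M
          have h2 := prod_mem_YFil n L _ le_rfl
          have := mul_mem_YFil n h1 h2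
          exact YFil_mono n (by omega) this

/-- the associated graded of the Yangian filtration is commutative:
if `x` has filtration degree `≤ p` and `y` has filtration degree `≤ q`, then
`[x, y]` has filtration degree `≤ p + q - 1`. -/
theorem yangian_commutator_filtration (n p q : ℕ) (x y : Yangian n)
    (hx : x ∈ YFil n p) (hy : y ∈ YFil n q) :
    ⁅x, y⁆ ∈ YFil n (p + q - 1) := by
  induction hx using Submodule.span_induction with
  | mem x hxS =>
    induction hy using Submodule.span_induction with
    | mem y hyS =>
      obtain ⟨L, hL, rfl⟩ := hxS
      obtain ⟨M, hM, rfl⟩ := hyS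
      exact YFil_mono n (by omega) (bracket_prod_prod n M L)
    | zero => simp only [Ring.lie_def, mul_zero, zero_mul, sub_self]; exact Submodule.zero_mem _
    | add y z hy hz ihy ihz => simp only [Ring.lie_def] at ihy ihz ⊢; rw [mul_add, add_mul, add_sub_add_comm]; exact Submodule.add_mem _ ihy ihz
    | smul c y hy ihy => simp only [Ring.lie_def] at ihy ⊢; rw [mul_smul_comm, smul_mul_assoc, ← smul_sub]; exact Submodule.smul_mem _ c ihy
  | zero => simp only [Ring.lie_def, mul_zero, zero_mul, sub_self]; exact Submodule.zero_mem _
  | add a b ha hb iha ihb => simp only [Ring.lie_def] at iha ihb ⊢; rw [mul_add, add_mul, add_sub_add_comm]; exact Submodule.add_mem _ iha ihb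
  | smul c a ha iha => simp only [Ring.lie_def] at iha ⊢; rw [mul_smul_comm, smul_mul_assoc, ← smul_sub]; exact Submodule.smul_mem _ c iha
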